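/- arXiv:1402.0934 — 5 statements merged into one kernel-verified Lean document; each statement's English description precedes it below -/
import Mathlib

section
/- Let X_1,…,X_n be i.i.d. real random variables with common distribution function F, right endpoint x_F = sup{t : F(t) < 1}, F(s) < 1 for all s < x_F, and lim_{s↑x_F} (1−F(s)) = 0. Then for every integer m with 1 ≤ m ≤ n, the fragility distribution FD_{n,m} exists and is degenerate at m; that is, lim_{s↑x_F} P(N_{s,n} = m | N_{s,n} ≥ m) = 1. -/
open MeasureTheory ProbabilityTheory Filter Set Topology Classical

section FragAux
open scoped ENNReal
set_option linter.unusedSectionVars false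

variable {Ω : Type*} [MeasurableSpace Ω] {μ : Measure Ω} [IsProbabilityMeasure μ]
  {n : ℕ} {X : Fin n → Ω → ℝ}

lemma frag_sum_eq_card (s : ℝ) (ω : Ω) :
    (∑ i, if s < X i ω then 1 else 0) = (Finset.univ.filter (fun i => s < X i ω)).card :=
  (Finset.card_filter _ _).symm

lemma frag_card_lt {m : ℕ} (hmn : m ≤ n) :
    (Finset.univ.filter (fun i : Fin n => (i : ℕ) < m)).card = m := by
  rw [Finset.card_filter, Fin.sum_univ_eq_sum_range (fun j => if j < m then 1 else 0),
    ← Finset.card_filter]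
  have h : (Finset.range n).filter (fun j => j < m) = Finset.range m := by
    ext j; simp only [Finset.mem_filter, Finset.mem_range]; omega
  rw [h, Finset.card_range]

lemma frag_meas_ge_le {s : ℝ}
    (hindep : iIndepFun X μ)
    {P : ℝ≥0∞} (hP : ∀ i, μ (X i ⁻¹' Set.Ioi s) = P) (k : ℕ) :
    μ {ω | k ≤ ∑ i, if s < X i ω then 1 else 0} ≤ n.choose k * P ^ k := by
  have hsub : {ω | k ≤ ∑ i, if s < X i ω then 1 else 0} ⊆
      ⋃ S ∈ Finset.powersetCard k (Finset.univ : Finset (Fin n)),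
        ⋂ i ∈ S, X i ⁻¹' Set.Ioi s := by
    intro ω hω
    simp only [Set.mem_setOf_eq, frag_sum_eq_card] at hω
    obtain ⟨T, hTsub, hTcard⟩ := Finset.exists_subset_card_eq hω
    refine Set.mem_iUnion₂.mpr ⟨T, Finset.mem_powersetCard.mpr ⟨Finset.subset_univ T, hTcard⟩, ?_⟩
    exact Set.mem_iInter₂.mpr fun i hi => (Finset.mem_filter.mp (hTsub hi)).2
  calc μ {ω | k ≤ ∑ i, if s < X i ω then 1 else 0}
      ≤ μ (⋃ S ∈ Finset.powersetCard k (Finset.univ : Finset (Fin n)),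
          ⋂ i ∈ S, X i ⁻¹' Set.Ioi s) := measure_mono hsub
    _ ≤ ∑ S ∈ Finset.powersetCard k (Finset.univ : Finset (Fin n)),
          μ (⋂ i ∈ S, X i ⁻¹' Set.Ioi s) := measure_biUnion_finset_le _ _
    _ = ∑ _S ∈ Finset.powersetCard k (Finset.univ : Finset (Fin n)), P ^ k := by
        refine Finset.sum_congr rfl fun S hS => ?_
        rw [hindep.meas_biInter (fun i _ => ⟨Set.Ioi s, measurableSet_Ioi, rfl⟩)]
        rw [Finset.prod_congr rfl (fun i _ => hP i), Finset.prod_const,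
          (Finset.mem_powersetCard.mp hS).2]
    _ = n.choose k * P ^ k := by
        rw [Finset.sum_const, Finset.card_powersetCard, Finset.card_univ, Fintype.card_fin,
          nsmul_eq_mul]

lemma frag_meas_eq_ge {s : ℝ} (hmeas : ∀ i, Measurable (X i))
    (hindep : iIndepFun X μ)
    {P : ℝ≥0∞} (hP : ∀ i, μ (X i ⁻¹' Set.Ioi s) = P) {m : ℕ} (hmn : m ≤ n) :
    P ^ m * (1 - P) ^ (n - m) ≤ μ {ω | (∑ i, if s < X i ω then 1 else 0) = m} := by
  set B : Fin n → Set ℝ := fun i => if (i : ℕ) < m then Set.Ioi s else Set.Iic s with hB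
  have hsub : (⋂ i, X i ⁻¹' B i) ⊆ {ω | (∑ i, if s < X i ω then 1 else 0) = m} := by
    intro ω hω
    simp only [Set.mem_iInter] at hω
    have hiff : ∀ i : Fin n, (s < X i ω) ↔ (i : ℕ) < m := by
      intro i
      have h := hω i
      by_cases hc : (i : ℕ) < m
      · simp only [hB, hc, if_true] at h
        exact ⟨fun _ => hc, fun _ => h⟩
      · simp only [hB, hc, if_false] at h
        exact ⟨fun hl => absurd hl (not_lt.mpr h), fun hl => (hc hl).elim⟩
    show (∑ i, if s < X i ω then 1 else 0) = m
    rw [frag_sum_eq_card,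
      Finset.filter_congr (fun i _ => by simp only [hiff i] : ∀ i ∈ Finset.univ, (s < X i ω) ↔ (i : ℕ) < m)]
    exact frag_card_lt hmn
  refine le_trans (le_of_eq ?_) (measure_mono hsub)
  have hBm : ∀ i, MeasurableSet (B i) := by
    intro i; by_cases hc : (i : ℕ) < m
    · simp only [hB, hc, if_true]; exact measurableSet_Ioi
    · simp only [hB, hc, if_false]; exact measurableSet_Iic
  rw [hindep.meas_iInter (fun i => ⟨B i, hBm i, rfl⟩)]
  have hQ : ∀ i : Fin n, μ (X i ⁻¹' B i) = if (i : ℕ) < m then P else 1 - P := by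
    intro i
    by_cases hc : (i : ℕ) < m
    · simp only [hB, hc, if_true]; exact hP i
    · simp only [hB, hc, if_false]
      have hcompl : X i ⁻¹' Set.Iic s = (X i ⁻¹' Set.Ioi s)ᶜ := by
        ext ω; simp [not_lt]
      rw [hcompl, measure_compl ((hmeas i) measurableSet_Ioi) (measure_ne_top μ _),
        measure_univ, hP i]
  rw [Finset.prod_congr rfl (fun i _ => hQ i), Finset.prod_ite (fun _ => P) (fun _ => 1 - P),
    Finset.prod_const, Finset.prod_const, frag_card_lt hmn]
  congr 2
  have := Finset.card_filter_add_card_filter_not (s := (Finset.univ : Finset (Fin n)))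
    (fun i : Fin n => (i : ℕ) < m)
  rw [frag_card_lt hmn, Finset.card_univ, Fintype.card_fin] at this
  omega

end FragAux

open scoped ENNReal

/-- Conditional probability `P(A | B)` as a real number. -/
noncomputable def condP {Ω : Type*} [MeasurableSpace Ω] (μ : Measure Ω) (A B : Set Ω) : ℝ :=
  (μ (A ∩ B)).toReal / (μ B).toReal

/-- For i.i.d. random variables `X_1, …, X_n` with common distribution
function `F`, right endpoint `x_F = sup {t | F t < 1}` with `F s < 1` for `s < x_F` and
`1 - F s → 0` as `s ↑ x_F`, the fragility distribution `FD_{n,m}` exists and is degenerate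
at `m` for every `1 ≤ m ≤ n`; in particular `P(N_{s,n} = m | N_{s,n} ≥ m) → 1` as `s ↑ x_F`. -/
theorem stmt0 {Ω : Type*} [MeasurableSpace Ω] (μ : Measure Ω) [IsProbabilityMeasure μ]
    (n : ℕ) (X : Fin n → Ω → ℝ) (hmeas : ∀ i, Measurable (X i))
    (hindep : iIndepFun X μ)
    (hident : ∀ i j, Measure.map (X i) μ = Measure.map (X j) μ)
    (F : ℝ → ℝ) (hF : ∀ i t, F t = (μ {ω | X i ω ≤ t}).toReal)
    (xF : ℝ) (hxF : xF = sSup {t | F t < 1})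
    (hFlt : ∀ s < xF, F s < 1)
    (hFlim : Tendsto (fun s => 1 - F s) (𝓝[<] xF) (𝓝 0)) :
    ∀ m : ℕ, 1 ≤ m → m ≤ n →
      (∀ A : Set ℕ, A ⊆ Set.Icc m n →
        Tendsto
          (fun s => condP μ {ω | (∑ i, if s < X i ω then 1 else 0) ∈ A}
            {ω | m ≤ ∑ i, if s < X i ω then 1 else 0})
          (𝓝[<] xF) (𝓝 (if m ∈ A then 1 else 0))) ∧
      Tendsto
        (fun s => condP μ {ω | (∑ i, if s < X i ω then 1 else 0) = m}
          {ω | m ≤ ∑ i, if s < X i ω then 1 else 0})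
        (𝓝[<] xF) (𝓝 1) := by
  intro m hm1 hmn
  have hn : 0 < n := lt_of_lt_of_le hm1 hmn
  set l := 𝓝[<] xF with hl
  set i0 : Fin n := ⟨0, hn⟩ with hi0
  have hmap : ∀ (s : ℝ) (i : Fin n), μ (X i ⁻¹' Set.Ioi s) = μ (X i0 ⁻¹' Set.Ioi s) := by
    intro s i
    rw [← Measure.map_apply (hmeas i) measurableSet_Ioi,
      ← Measure.map_apply (hmeas i0) measurableSet_Ioi, hident i i0]
  set P : ℝ → ℝ≥0∞ := fun s => μ (X i0 ⁻¹' Set.Ioi s) with hPdef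
  set p : ℝ → ℝ := fun s => 1 - F s with hpdef
  have hplim : Tendsto p l (𝓝 0) := hFlim
  have hPle : ∀ s, P s ≤ 1 := fun s => prob_le_one
  have hPnt : ∀ s, P s ≠ ⊤ := fun s => measure_ne_top μ _
  have hPtoReal : ∀ s, (P s).toReal = p s := by
    intro s
    have hcompl : X i0 ⁻¹' Set.Ioi s = {ω | X i0 ω ≤ s}ᶜ := by
      ext ω; simp [not_le]
    have hms : MeasurableSet {ω | X i0 ω ≤ s} := (hmeas i0) measurableSet_Iic
    rw [hPdef]
    simp only []
    rw [hcompl, measure_compl hms (measure_ne_top μ _), measure_univ,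
      ENNReal.toReal_sub_of_le prob_le_one ENNReal.one_ne_top, ENNReal.toReal_one, hpdef]
    simp only []
    rw [hF i0 s]
  have h1P : ∀ s, (1 - P s).toReal = 1 - p s := by
    intro s
    rw [ENNReal.toReal_sub_of_le (hPle s) ENNReal.one_ne_top, ENNReal.toReal_one, hPtoReal]
  set q : ℝ → ℝ := fun s => (μ {ω | m ≤ ∑ i, if s < X i ω then 1 else 0}).toReal with hqdef
  set a : ℝ → ℝ := fun s => (μ {ω | (∑ i, if s < X i ω then 1 else 0) = m}).toReal with hadef
  set r : ℝ → ℝ := fun s => (μ {ω | m + 1 ≤ ∑ i, if s < X i ω then 1 else 0}).toReal with hrdef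
  have hNmeas : ∀ s : ℝ, Measurable (fun ω => (∑ i, if s < X i ω then 1 else 0 : ℕ)) := by
    intro s
    apply Finset.measurable_sum
    intro i _
    exact Measurable.ite (measurableSet_lt measurable_const (hmeas i)) measurable_const
      measurable_const
  have hqar : ∀ s, q s = a s + r s := by
    intro s
    have hun : {ω | m ≤ ∑ i, if s < X i ω then 1 else 0} =
        {ω | (∑ i, if s < X i ω then 1 else 0) = m} ∪
        {ω | m + 1 ≤ ∑ i, if s < X i ω then 1 else 0} := by
      ext ω; simp only [Set.mem_setOf_eq, Set.mem_union]; omega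
    have hdisj : Disjoint {ω | (∑ i, if s < X i ω then 1 else 0) = m}
        {ω | m + 1 ≤ ∑ i, if s < X i ω then 1 else 0} := by
      rw [Set.disjoint_left]
      intro ω h1 h2
      simp only [Set.mem_setOf_eq] at h1 h2
      omega
    have hms2 : MeasurableSet {ω | m + 1 ≤ ∑ i, if s < X i ω then 1 else 0} :=
      measurableSet_le measurable_const (hNmeas s)
    rw [hqdef, hadef, hrdef]
    simp only []
    rw [hun, measure_union hdisj hms2,
      ENNReal.toReal_add (measure_ne_top μ _) (measure_ne_top μ _)]
  have hrb : ∀ s, r s ≤ (n.choose (m + 1) : ℝ) * (p s) ^ (m + 1) := by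
    intro s
    have h := frag_meas_ge_le hindep (fun i => hmap s i) (m + 1)
    have h2 := ENNReal.toReal_mono
      (ENNReal.mul_ne_top (ENNReal.natCast_ne_top _) (ENNReal.pow_ne_top (hPnt s))) h
    rwa [ENNReal.toReal_mul, ENNReal.toReal_pow, ENNReal.toReal_natCast, hPtoReal] at h2
  have hab : ∀ s, (p s) ^ m * (1 - p s) ^ (n - m) ≤ a s := by
    intro s
    have h := frag_meas_eq_ge hmeas hindep (fun i => hmap s i) hmn
    have h2 := ENNReal.toReal_mono (measure_ne_top μ _) h
    rwa [ENNReal.toReal_mul, ENNReal.toReal_pow, ENNReal.toReal_pow, hPtoReal, h1P] at h2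
  have haq : ∀ s, a s ≤ q s := by
    intro s
    refine ENNReal.toReal_mono (measure_ne_top μ _) (measure_mono ?_)
    intro ω hω
    simp only [Set.mem_setOf_eq] at hω ⊢
    omega
  have hev : ∀ᶠ s in l, 0 < p s ∧ p s < 1 / 2 := by
    have h1 : ∀ᶠ s in l, s < xF := self_mem_nhdsWithin
    have h2 : ∀ᶠ s in l, p s < 1 / 2 := hFlim.eventually (gt_mem_nhds (by norm_num))
    filter_upwards [h1, h2] with s hs h2s
    refine ⟨?_, h2s⟩
    have h3 := hFlt s hs
    show (0:ℝ) < 1 - F s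
    linarith [h3]
  have hqpos : ∀ s, 0 < p s → p s < 1 / 2 → 0 < q s := by
    intro s h0 h2
    have h1p : (0:ℝ) < 1 - p s := sub_pos.mpr (lt_trans h2 (by norm_num))
    exact lt_of_lt_of_le (lt_of_lt_of_le (mul_pos (pow_pos h0 m) (pow_pos h1p _)) (hab s)) (haq s)
  set K : ℝ := (n.choose (m + 1) : ℝ) * 2 ^ (n - m) with hKdef
  have hKey : ∀ s, 0 < p s → p s < 1 / 2 → r s / q s ≤ K * p s := by
    intro s h0 h2
    have h1p : (1:ℝ) / 2 ≤ 1 - p s := by linarith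
    have hq0 := hqpos s h0 h2
    rw [div_le_iff₀ hq0]
    have h2k : (2:ℝ) ^ (n - m) * (1/2:ℝ) ^ (n - m) = 1 := by
      rw [← mul_pow]; norm_num
    calc r s ≤ (n.choose (m + 1) : ℝ) * (p s) ^ (m + 1) := hrb s
      _ = K * p s * ((p s) ^ m * (1/2 : ℝ) ^ (n - m)) := by
          rw [pow_succ, hKdef]
          linear_combination (-(n.choose (m + 1) : ℝ) * p s * p s ^ m) * h2k
      _ ≤ K * p s * ((p s) ^ m * (1 - p s) ^ (n - m)) := by
          have hK0 : (0:ℝ) ≤ K * p s := by positivity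
          apply mul_le_mul_of_nonneg_left _ hK0
          exact mul_le_mul_of_nonneg_left
            (pow_le_pow_left₀ (by norm_num) h1p _) (pow_nonneg h0.le m)
      _ ≤ K * p s * q s := by
          apply mul_le_mul_of_nonneg_left (le_trans (hab s) (haq s)) (by positivity)
  have hKp : Tendsto (fun s => K * p s) l (𝓝 0) := by
    have h := hplim.const_mul K
    simpa using h
  have hr0 : Tendsto (fun s => r s / q s) l (𝓝 0) := by
    refine squeeze_zero' ?_ ?_ hKp
    · exact hev.mono fun s _ => div_nonneg ENNReal.toReal_nonneg ENNReal.toReal_nonneg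
    · exact hev.mono fun s hs => hKey s hs.1 hs.2
  have ha1 : Tendsto (fun s => a s / q s) l (𝓝 1) := by
    have heq : ∀ᶠ s in l, 1 - r s / q s = a s / q s := by
      refine hev.mono fun s hs => ?_
      have hq0 := hqpos s hs.1 hs.2
      have haa : a s = q s - r s := by have := hqar s; linarith
      rw [haa, sub_div, div_self (ne_of_gt hq0)]
    have h := (tendsto_const_nhds (x := (1:ℝ)) (f := l)).sub hr0
    rw [sub_zero] at h
    exact Filter.Tendsto.congr' heq h
  have hcond_eq : ∀ s : ℝ, condP μ {ω | (∑ i, if s < X i ω then 1 else 0) = m}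
      {ω | m ≤ ∑ i, if s < X i ω then 1 else 0} = a s / q s := by
    intro s
    unfold condP
    rw [Set.inter_eq_self_of_subset_left]
    intro ω hω
    simp only [Set.mem_setOf_eq] at hω ⊢
    omega
  constructor
  · intro A hA
    by_cases hmA : m ∈ A
    · rw [if_pos hmA]
      refine tendsto_of_tendsto_of_tendsto_of_le_of_le' ha1 tendsto_const_nhds ?_ ?_
      · refine hev.mono fun s hs => ?_
        have hq0 := hqpos s hs.1 hs.2
        unfold condP
        refine (div_le_div_iff_of_pos_right hq0).mpr ?_
        refine ENNReal.toReal_mono (measure_ne_top μ _) (measure_mono ?_)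
        intro ω hω
        simp only [Set.mem_setOf_eq] at hω
        refine ⟨?_, ?_⟩
        · simp only [Set.mem_setOf_eq, hω]; exact hmA
        · simp only [Set.mem_setOf_eq]; omega
      · refine hev.mono fun s hs => ?_
        unfold condP
        refine div_le_one_of_le₀ (ENNReal.toReal_mono (measure_ne_top μ _)
          (measure_mono Set.inter_subset_right)) ENNReal.toReal_nonneg
    · rw [if_neg hmA]
      refine squeeze_zero' ?_ ?_ hr0
      · exact hev.mono fun s _ => div_nonneg ENNReal.toReal_nonneg ENNReal.toReal_nonneg
      · refine hev.mono fun s hs => ?_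
        have hq0 := hqpos s hs.1 hs.2
        unfold condP
        refine (div_le_div_iff_of_pos_right hq0).mpr ?_
        refine ENNReal.toReal_mono (measure_ne_top μ _) (measure_mono ?_)
        rintro ω ⟨h1, h2⟩
        simp only [Set.mem_setOf_eq] at h1 h2 ⊢
        have hInA := hA h1
        have hne : (∑ i, if s < X i ω then 1 else 0) ≠ m := fun h => hmA (h ▸ h1)
        rcases hInA with ⟨hge, hle⟩
        omega
  · have hfun : (fun s => condP μ {ω | (∑ i, if s < X i ω then 1 else 0) = m}
        {ω | m ≤ ∑ i, if s < X i ω then 1 else 0}) = fun s => a s / q s := funext hcond_eq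
    rw [hfun]
    exact ha1
end

section
/- Let X_1,…,X_n be identically distributed real random variables with common distribution function F and right endpoint x_F = sup{t : F(t) < 1}, let 1 ≤ m < n, and assume P(N_{s,n} ≥ m+1) > 0 for all s < x_F. If L := lim_{s↑x_F} P(N_{s,n} = m)/P(N_{s,n} ≥ m+1) exists and is finite, and FD_{n,m+1}(B) = lim_{s↑x_F} P(N_{s,n} ∈ B | N_{s,n} ≥ m+1) exists for every B ⊆ {m+1,…,n}, then FD_{n,m}(A) exists for every A ⊆ {m,…,n} and FD_{n,m}(A) = (FD_{n,m+1}(A ∩ {m+1,…,n}) + L·1{m ∈ A}) / (1 + L). -/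
open MeasureTheory ProbabilityTheory Filter Set Topology Classical

/-- For identically distributed `X_1, …, X_n` with common distribution
function `F` and right endpoint `x_F`, if `P(N_{s,n} ≥ m+1) > 0` for all `s < x_F`,
`L = lim_{s↑x_F} P(N_{s,n} = m)/P(N_{s,n} ≥ m+1)` exists (finite) and `FD_{n,m+1}` exists,
then `FD_{n,m}` exists and
`FD_{n,m}(A) = (FD_{n,m+1}(A ∩ {m+1,…,n}) + L·1{m ∈ A}) / (1 + L)`. -/
theorem stmt1 {Ω : Type*} [MeasurableSpace Ω] (μ : Measure Ω) [IsProbabilityMeasure μ]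
    (n : ℕ) (X : Fin n → Ω → ℝ) (hmeas : ∀ i, Measurable (X i))
    (hident : ∀ i j, Measure.map (X i) μ = Measure.map (X j) μ)
    (F : ℝ → ℝ) (hF : ∀ i t, F t = (μ {ω | X i ω ≤ t}).toReal)
    (xF : ℝ) (hxF : xF = sSup {t | F t < 1})
    (m : ℕ) (hm : 1 ≤ m) (hmn : m < n)
    (hpos : ∀ s < xF, 0 < μ {ω | m + 1 ≤ ∑ i, if s < X i ω then 1 else 0})
    (L : ℝ)
    (hL : Tendsto
      (fun s => (μ {ω | (∑ i, if s < X i ω then 1 else 0) = m}).toReal /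
        (μ {ω | m + 1 ≤ ∑ i, if s < X i ω then 1 else 0}).toReal)
      (𝓝[<] xF) (𝓝 L))
    (FD : Set ℕ → ℝ)
    (hFD : ∀ B : Set ℕ, B ⊆ Set.Icc (m + 1) n →
      Tendsto
        (fun s => condP μ {ω | (∑ i, if s < X i ω then 1 else 0) ∈ B}
          {ω | m + 1 ≤ ∑ i, if s < X i ω then 1 else 0})
        (𝓝[<] xF) (𝓝 (FD B))) :
    ∀ A : Set ℕ, A ⊆ Set.Icc m n →
      Tendsto
        (fun s => condP μ {ω | (∑ i, if s < X i ω then 1 else 0) ∈ A}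
          {ω | m ≤ ∑ i, if s < X i ω then 1 else 0})
        (𝓝[<] xF)
        (𝓝 ((FD (A ∩ Set.Ici (m + 1)) + L * (if m ∈ A then 1 else 0)) / (1 + L))) := by
  intro A hA
  rcases eq_or_neBot (𝓝[<] xF) with hbot | hbot
  · rw [hbot]; exact tendsto_bot
  have hL0 : 0 ≤ L := ge_of_tendsto hL (Eventually.of_forall fun s => by positivity)
  have hden : (1:ℝ) + L ≠ 0 := by linarith
  have hsub : A ∩ Set.Ici (m+1) ⊆ Set.Icc (m+1) n := fun k hk => ⟨hk.2, (hA hk.1).2⟩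
  have key : Tendsto (fun s =>
      (condP μ {ω | (∑ i, if s < X i ω then 1 else 0) ∈ A ∩ Set.Ici (m+1)}
        {ω | m + 1 ≤ ∑ i, if s < X i ω then 1 else 0}
       + (if m ∈ A then (1:ℝ) else 0) *
         ((μ {ω | (∑ i, if s < X i ω then 1 else 0) = m}).toReal /
          (μ {ω | m + 1 ≤ ∑ i, if s < X i ω then 1 else 0}).toReal)) /
      (1 + ((μ {ω | (∑ i, if s < X i ω then 1 else 0) = m}).toReal /
          (μ {ω | m + 1 ≤ ∑ i, if s < X i ω then 1 else 0}).toReal)))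
      (𝓝[<] xF)
      (𝓝 ((FD (A ∩ Set.Ici (m + 1)) + L * (if m ∈ A then 1 else 0)) / (1 + L))) := by
    have hnum := (hFD _ hsub).add (hL.const_mul (if m ∈ A then (1:ℝ) else 0))
    rw [show (if m ∈ A then (1:ℝ) else 0) * L = L * (if m ∈ A then 1 else 0) from mul_comm _ _]
      at hnum
    exact hnum.div (tendsto_const_nhds.add hL) hden
  refine key.congr' ?_
  filter_upwards [self_mem_nhdsWithin] with s hs
  have hs' : s < xF := hs
  set Nf : Ω → ℕ := fun ω => ∑ i, if s < X i ω then 1 else 0 with hNf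
  have hNmeas : Measurable Nf := Finset.measurable_sum _ fun i _ =>
    Measurable.ite (measurableSet_lt measurable_const (hmeas i)) measurable_const
      measurable_const
  have hbpos : 0 < (μ {ω | m + 1 ≤ Nf ω}).toReal :=
    ENNReal.toReal_pos (hpos s hs').ne' (measure_ne_top μ _)
  set a : ℝ := (μ {ω | Nf ω = m}).toReal with ha
  set b : ℝ := (μ {ω | m + 1 ≤ Nf ω}).toReal with hb
  have ha0 : 0 ≤ a := ENNReal.toReal_nonneg
  have hb0 : b ≠ 0 := hbpos.ne'
  have hba : b + a ≠ 0 := by positivity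
  have e2 : {ω | m ≤ Nf ω} = {ω | m + 1 ≤ Nf ω} ∪ {ω | Nf ω = m} := by
    ext ω; simp only [Set.mem_setOf_eq, Set.mem_union]; omega
  have hdisj : Disjoint {ω | m + 1 ≤ Nf ω} {ω | Nf ω = m} := by
    rw [Set.disjoint_left]; intro ω h1 h2
    simp only [Set.mem_setOf_eq] at h1 h2; omega
  have hmsm : MeasurableSet {ω | Nf ω = m} := hNmeas (measurableSet_singleton m)
  have hmA : (μ {ω | m ≤ Nf ω}).toReal = b + a := by
    rw [e2, measure_union hdisj hmsm,
      ENNReal.toReal_add (measure_ne_top μ _) (measure_ne_top μ _)]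
  have en1 : {ω | Nf ω ∈ A} ∩ {ω | m ≤ Nf ω} = {ω | Nf ω ∈ A} :=
    Set.inter_eq_left.mpr fun ω hω => (hA hω).1
  have en2 : {ω | Nf ω ∈ A ∩ Set.Ici (m+1)} ∩ {ω | m + 1 ≤ Nf ω}
      = {ω | Nf ω ∈ A ∩ Set.Ici (m+1)} :=
    Set.inter_eq_left.mpr fun ω hω => hω.2
  simp only [condP, en1, en2, hmA, ← ha, ← hb]
  rw [en1, en2, hmA, ← hb]
  by_cases hmem : m ∈ A
  · have e3 : {ω | Nf ω ∈ A} = {ω | Nf ω ∈ A ∩ Set.Ici (m+1)} ∪ {ω | Nf ω = m} := by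
      ext ω
      simp only [Set.mem_setOf_eq, Set.mem_union, Set.mem_inter_iff, Set.mem_Ici]
      constructor
      · intro h
        rcases eq_or_ne (Nf ω) m with he | he
        · exact Or.inr he
        · exact Or.inl ⟨h, by have := (hA h).1; omega⟩
      · rintro (⟨h, -⟩ | h)
        · exact h
        · rw [h]; exact hmem
    have hdisj3 : Disjoint {ω | Nf ω ∈ A ∩ Set.Ici (m+1)} {ω | Nf ω = m} := by
      rw [Set.disjoint_left]; intro ω h1 h2
      simp only [Set.mem_setOf_eq, Set.mem_inter_iff, Set.mem_Ici] at h1 h2; omega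
    have hsum : (μ {ω | Nf ω ∈ A}).toReal
        = (μ {ω | Nf ω ∈ A ∩ Set.Ici (m+1)}).toReal + a := by
      rw [e3, measure_union hdisj3 hmsm,
        ENNReal.toReal_add (measure_ne_top μ _) (measure_ne_top μ _)]
    rw [hsum, if_pos hmem]
    field_simp
  · have hAe : A ∩ Set.Ici (m+1) = A :=
      Set.inter_eq_left.mpr fun k hk => by
        have h1 := (hA hk).1
        have h2 : k ≠ m := fun e => hmem (e ▸ hk)
        simp only [Set.mem_Ici]; omega
    rw [hAe, if_neg hmem, zero_mul, add_zero]
    field_simp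
end

section
/- Let G_1 be the distribution function of the density g_1 on [0,1] given by g_1(y) = 2 if y ∈ [1 − 2^{−k}, 1 − 3·2^{−(k+2)}] for some k ∈ {0,1,2,…} and g_1(y) = 0 otherwise. Then the limit lim_{y→1⁻} (1 − G_1(y))/(1 − y) does not exist; in particular, along y_k = 1 − 2^{−k} the ratio equals 1 while along y_k = 1 − 3·2^{−(k+2)} the ratio equals 2/3. -/
open MeasureTheory Filter Set Topology Classical

/-- The density `g₁` on `[0,1]`: equal to `2` on the intervals
`[1 - 2⁻ᵏ, 1 - 3·2⁻⁽ᵏ⁺²⁾]`, `k ∈ ℕ`, and `0` elsewhere. -/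
noncomputable def g1 (y : ℝ) : ℝ :=
  if ∃ k : ℕ, 1 - 1 / 2 ^ k ≤ y ∧ y ≤ 1 - 3 / 2 ^ (k + 2) then 2 else 0

/-- The distribution function of `g₁`. -/
noncomputable def G1 (y : ℝ) : ℝ := ∫ t in (0:ℝ)..y, g1 t

lemma int_on (k : ℕ) :
    ∫ t in (1 - 1/2^k : ℝ)..(1 - 3/2^(k+2)), g1 t = 1/2^(k+1) := by
  have hpow : (0:ℝ) < 2^k := by positivity
  have hab : (1 - 1/2^k : ℝ) ≤ 1 - 3/2^(k+2) := by
    rw [sub_le_sub_iff_left]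
    rw [div_le_div_iff₀ (by positivity) hpow]
    ring_nf
    linarith
  rw [intervalIntegral.integral_congr (g := fun _ => (2:ℝ))]
  · rw [intervalIntegral.integral_const, smul_eq_mul]
    field_simp
    ring
  · intro t ht
    rw [uIcc_of_le hab, mem_Icc] at ht
    simp only [g1]
    rw [if_pos ⟨k, ht.1, ht.2⟩]

lemma int_gap (k : ℕ) :
    ∫ t in (1 - 3/2^(k+2) : ℝ)..(1 - 1/2^(k+1)), g1 t = 0 := by
  have hab : (1 - 3/2^(k+2) : ℝ) ≤ 1 - 1/2^(k+1) := by
    rw [sub_le_sub_iff_left, div_le_div_iff₀ (by positivity) (by positivity)]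
    rw [pow_succ, pow_add]
    nlinarith [pow_pos (by norm_num : (0:ℝ) < 2) k]
  rw [← intervalIntegral.integral_zero (a := (1 - 3/2^(k+2) : ℝ)) (b := (1 - 1/2^(k+1))) (E := ℝ)]
  apply intervalIntegral.integral_congr_ae
  have hne : ∀ᵐ t : ℝ, t ≠ (1 - 1/2^(k+1) : ℝ) := by
    rw [ae_iff]
    simp only [ne_eq, not_not]
    exact measure_mono_null (fun x hx => hx) (Real.volume_singleton)
  filter_upwards [hne] with t hne ht
  rw [uIoc_of_le hab, mem_Ioc] at ht
  have ht2 : t < 1 - 1/2^(k+1) := lt_of_le_of_ne ht.2 hne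
  simp only [g1]
  rw [if_neg]
  rintro ⟨j, hj1, hj2⟩
  -- from hj1 and ht2 : 1 - 1/2^j ≤ t < 1 - 1/2^(k+1), so 1/2^(k+1) < 1/2^j, so j ≤ k
  have h1 : (1:ℝ)/2^(k+1) < 1/2^j := by linarith
  have h2 : (2:ℝ)^j < 2^(k+1) := by
    by_contra hcon
    push_neg at hcon
    have := one_div_le_one_div_of_le (by positivity) hcon
    linarith
  have hjk : j ≤ k := by
    have := (pow_lt_pow_iff_right₀ (by norm_num : (1:ℝ) < 2)).mp h2
    omega
  have h3 : (2:ℝ)^(j+2) ≤ 2^(k+2) := by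
    apply pow_le_pow_right₀ (by norm_num) (by omega)
  have h4 : (3:ℝ)/2^(k+2) ≤ 3/2^(j+2) := by
    apply div_le_div_of_nonneg_left (by norm_num) (by positivity) h3
  linarith [ht.1]

lemma g1_meas : Measurable g1 := by
  have h : g1 = (⋃ k : ℕ, Icc (1 - 1/2^k : ℝ) (1 - 3/2^(k+2))).indicator (fun _ => 2) := by
    funext y
    by_cases h : ∃ k : ℕ, 1 - 1 / 2 ^ k ≤ y ∧ y ≤ 1 - 3 / 2 ^ (k + 2)
    · simp [g1, h, Set.indicator, mem_iUnion, mem_Icc]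
    · simp [g1, h, Set.indicator, mem_iUnion, mem_Icc]
  rw [h]
  exact measurable_const.indicator (MeasurableSet.iUnion fun k => measurableSet_Icc)

lemma g1_ii (a b : ℝ) : IntervalIntegrable g1 volume a b := by
  rw [intervalIntegrable_iff]
  apply Integrable.mono' (g := fun _ => (2:ℝ))
  · exact integrableOn_const measure_Ioc_lt_top.ne
  · exact g1_meas.aestronglyMeasurable
  · filter_upwards with t
    rw [Real.norm_eq_abs]
    unfold g1; split <;> norm_num

lemma key (k : ℕ) :
    G1 (1 - 1/2^k) = 1 - 1/2^k ∧ G1 (1 - 3/2^(k+2)) = 1 - 1/2^(k+1) := by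
  induction k with
  | zero =>
    have h0 : G1 (1 - 1/2^(0:ℕ)) = 1 - 1/2^(0:ℕ) := by
      norm_num [G1, intervalIntegral.integral_same]
    refine ⟨h0, ?_⟩
    have := intervalIntegral.integral_add_adjacent_intervals (a := (0:ℝ))
      (b := (1 - 1/2^(0:ℕ) : ℝ)) (c := (1 - 3/2^(0+2) : ℝ)) (f := g1) (μ := volume)
      (g1_ii _ _) (g1_ii _ _)
    have hb : G1 (1 - 3/2^(0+2)) = G1 (1 - 1/2^(0:ℕ)) + ∫ t in (1 - 1/2^(0:ℕ) : ℝ)..(1 - 3/2^(0+2)), g1 t := by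
      rw [G1, G1, this]
    rw [hb, h0, int_on 0]
    norm_num
  | succ k ih =>
    have ha : G1 (1 - 1/2^(k+1)) = G1 (1 - 3/2^(k+2)) +
        ∫ t in (1 - 3/2^(k+2) : ℝ)..(1 - 1/2^(k+1)), g1 t := by
      rw [G1, G1, intervalIntegral.integral_add_adjacent_intervals (g1_ii _ _) (g1_ii _ _)]
    have hA : G1 (1 - 1/2^(k+1)) = 1 - 1/2^(k+1) := by
      rw [ha, ih.2, int_gap k]; ring
    refine ⟨hA, ?_⟩
    have hb : G1 (1 - 3/2^(k+1+2)) = G1 (1 - 1/2^(k+1)) +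
        ∫ t in (1 - 1/2^(k+1) : ℝ)..(1 - 3/2^(k+1+2)), g1 t := by
      rw [G1, G1, intervalIntegral.integral_add_adjacent_intervals (g1_ii _ _) (g1_ii _ _)]
    rw [hb, hA, int_on (k+1)]
    have h2 : (0:ℝ) < 2^(k+1) := by positivity
    field_simp
    ring

lemma ratio_a (k : ℕ) : (1 - G1 (1 - 1 / 2 ^ k)) / (1 - (1 - 1 / 2 ^ k)) = 1 := by
  rw [(key k).1]
  have : (0:ℝ) < 1/2^k := by positivity
  field_simp

lemma ratio_b (k : ℕ) : (1 - G1 (1 - 3 / 2 ^ (k + 2))) / (1 - (1 - 3 / 2 ^ (k + 2))) = 2 / 3 := by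
  rw [(key k).2]
  have h2 : (0:ℝ) < 2^k := by positivity
  rw [pow_succ, pow_add]
  field_simp
  ring


/-- The limit `lim_{y→1⁻} (1 - G₁(y))/(1 - y)` does not exist; along
`y_k = 1 - 2⁻ᵏ` the ratio is `1`, and along `y_k = 1 - 3·2⁻⁽ᵏ⁺²⁾` it is `2/3`. -/
theorem stmt2 :
    (∀ k : ℕ,
      (1 - G1 (1 - 1 / 2 ^ k)) / (1 - (1 - 1 / 2 ^ k)) = 1 ∧
      (1 - G1 (1 - 3 / 2 ^ (k + 2))) / (1 - (1 - 3 / 2 ^ (k + 2))) = 2 / 3) ∧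
    ¬ ∃ L : ℝ, Tendsto (fun y => (1 - G1 y) / (1 - y)) (𝓝[<] (1:ℝ)) (𝓝 L) := by
  refine ⟨fun k => ⟨ratio_a k, ratio_b k⟩, ?_⟩
  rintro ⟨L, hL⟩
  have hpow : Tendsto (fun k : ℕ => (1/2 : ℝ)^k) atTop (𝓝 0) :=
    tendsto_pow_atTop_nhds_zero_of_lt_one (by norm_num) (by norm_num)
  have hA : Tendsto (fun k : ℕ => (1 - 1/2^k : ℝ)) atTop (𝓝[<] 1) := by
    apply tendsto_nhdsWithin_of_tendsto_nhds_of_eventually_within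
    · have : Tendsto (fun k : ℕ => (1 - (1/2:ℝ)^k)) atTop (𝓝 (1 - 0)) :=
        tendsto_const_nhds.sub hpow
      simpa [one_div_pow] using this
    · filter_upwards with k
      have : (0:ℝ) < 1/2^k := by positivity
      simp only [mem_Iio]; linarith
  have hB : Tendsto (fun k : ℕ => (1 - 3/2^(k+2) : ℝ)) atTop (𝓝[<] 1) := by
    apply tendsto_nhdsWithin_of_tendsto_nhds_of_eventually_within
    · have h3 : Tendsto (fun k : ℕ => (3 * (1/2:ℝ)^(k+2))) atTop (𝓝 (3 * 0)) :=
        (hpow.comp (tendsto_add_atTop_nat 2)).const_mul 3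
      have : Tendsto (fun k : ℕ => (1 - 3 * (1/2:ℝ)^(k+2))) atTop (𝓝 (1 - 3 * 0)) :=
        tendsto_const_nhds.sub h3
      simp only [mul_zero, sub_zero] at this
      convert this using 2 with k
      rw [one_div_pow]; ring
    · filter_upwards with k
      have : (0:ℝ) < 3/2^(k+2) := by positivity
      simp only [mem_Iio]; linarith
  have hLA : Tendsto (fun k : ℕ => (1 - G1 (1 - 1/2^k)) / (1 - (1 - 1/2^k))) atTop (𝓝 L) :=
    hL.comp hA
  have hLB : Tendsto (fun k : ℕ => (1 - G1 (1 - 3/2^(k+2))) / (1 - (1 - 3/2^(k+2)))) atTop (𝓝 L) :=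
    hL.comp hB
  have e1 : L = 1 := by
    have : Tendsto (fun _ : ℕ => (1:ℝ)) atTop (𝓝 L) := by
      convert hLA using 2 with k; exact (ratio_a k).symm
    exact tendsto_nhds_unique this tendsto_const_nhds
  have e2 : L = 2/3 := by
    have : Tendsto (fun _ : ℕ => (2/3:ℝ)) atTop (𝓝 L) := by
      convert hLB using 2 with k; exact (ratio_b k).symm
    exact tendsto_nhds_unique this tendsto_const_nhds
  rw [e1] at e2; norm_num at e2
end

section
/- Let θ > 0, let p be a probability distribution on {1, 2, …}, let m ≥ 1, and for τ > 0 let N^τ = Σ_{i=1}^{P_τ} ξ_i where P_τ ~ Poisson(θτ) and ξ_1, ξ_2, … are i.i.d. with distribution p, independent of P_τ. Set I_m = min{i ≥ 1 : p^{*i}(ℤ_m) > 0}, where p^{*i} is the i-fold convolution of p and ℤ_m = {m, m+1, …}. Then for every A ⊆ ℤ_m, lim_{τ→0⁺} P(N^τ ∈ A | N^τ ≥ m) = p^{*I_m}(A)/p^{*I_m}(ℤ_m). In particular, for m = 1 the limit distribution is p itself. -/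
open Filter Set Topology Classical

/-- `convPow p i` is the `i`-fold convolution `p^{*i}` of a distribution `p` on `ℕ`. -/
noncomputable def convPow (p : ℕ → ℝ) : ℕ → ℕ → ℝ
  | 0, k => if k = 0 then 1 else 0
  | (i + 1), k => ∑ j ∈ Finset.range (k + 1), convPow p i j * p (k - j)

/-- The Poisson(`lam`) probability mass function. -/
noncomputable def poiPMF (lam : ℝ) (i : ℕ) : ℝ := Real.exp (-lam) * lam ^ i / i.factorial

/-- The probability mass function of the compound Poisson distribution with Poisson rate
`lam` and cluster (compounding) distribution `p`. -/
noncomputable def cpPMF (lam : ℝ) (p : ℕ → ℝ) (k : ℕ) : ℝ :=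
  ∑' i : ℕ, poiPMF lam i * convPow p i k

section Aux

variable {p : ℕ → ℝ}

lemma convPow_nonneg (hpnn : ∀ k, 0 ≤ p k) : ∀ i k, 0 ≤ convPow p i k
  | 0, k => by simp only [convPow]; split <;> norm_num
  | (i + 1), k => by
      simp only [convPow]
      exact Finset.sum_nonneg fun j _ => mul_nonneg (convPow_nonneg hpnn i j) (hpnn _)

lemma hasSum_convPow (hpnn : ∀ k, 0 ≤ p k) (hpsum : HasSum p 1) :
    ∀ i, HasSum (convPow p i) 1
  | 0 => by
      convert hasSum_ite_eq 0 (1 : ℝ) using 1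
      funext k; simp [convPow]
  | (i + 1) => by
      have ih := hasSum_convPow hpnn hpsum i
      have hsi : Summable (convPow p i) := ih.summable
      have hsp : Summable p := hpsum.summable
      have hprod : Summable fun x : ℕ × ℕ => convPow p i x.1 * p x.2 :=
        hsi.mul_of_nonneg hsp (fun k => convPow_nonneg hpnn i k) hpnn
      have hsum2 : Summable fun n => ∑ k ∈ Finset.range (n + 1), convPow p i k * p (n - k) :=
        summable_sum_mul_range_of_summable_mul hprod
      have h := Summable.tsum_mul_tsum_eq_tsum_sum_range hsi hsp hprod
      rw [ih.tsum_eq, hpsum.tsum_eq, one_mul] at h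
      have hh : HasSum (fun n => ∑ k ∈ Finset.range (n + 1), convPow p i k * p (n - k)) 1 :=
        hsum2.hasSum_iff.mpr h.symm
      have hfe : convPow p (i + 1) =
          fun n => ∑ k ∈ Finset.range (n + 1), convPow p i k * p (n - k) := by
        funext n; simp [convPow]
      rw [hfe]
      exact hh

lemma convPow_le_one (hpnn : ∀ k, 0 ≤ p k) (hpsum : HasSum p 1) (i k : ℕ) :
    convPow p i k ≤ 1 :=
  le_hasSum (hasSum_convPow hpnn hpsum i) k fun j _ => convPow_nonneg hpnn i j

lemma convPow_eq_zero (hp0 : p 0 = 0) : ∀ i k, k < i → convPow p i k = 0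
  | 0, k, h => absurd h (Nat.not_lt_zero k)
  | (i + 1), k, h => by
      simp only [convPow]
      apply Finset.sum_eq_zero
      intro j hj
      rw [Finset.mem_range] at hj
      rcases lt_or_ge j i with hji | hji
      · rw [convPow_eq_zero hp0 i j hji, zero_mul]
      · have hkj : k - j = 0 := by omega
        rw [hkj, hp0, mul_zero]

lemma convPow_one (p : ℕ → ℝ) (k : ℕ) : convPow p 1 k = p k := by
  simp only [convPow]
  rw [Finset.sum_eq_single 0]
  · simp
  · intro j _ hj
    simp [hj]
  · intro h; exact absurd (Finset.mem_range.mpr (Nat.succ_pos k)) h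

lemma summable_ite_of {f : ℕ → ℝ} (hnn : ∀ k, 0 ≤ f k) (hf : Summable f)
    (P : ℕ → Prop) [DecidablePred P] : Summable fun k => if P k then f k else 0 :=
  Summable.of_nonneg_of_le (fun k => by by_cases h : P k <;> simp [h, hnn k])
    (fun k => by by_cases h : P k <;> simp [h, hnn k]) hf

lemma tsum_ite_nonneg {f : ℕ → ℝ} (hnn : ∀ k, 0 ≤ f k) (P : ℕ → Prop) [DecidablePred P] :
    0 ≤ ∑' k, if P k then f k else 0 :=
  tsum_nonneg fun k => by by_cases h : P k <;> simp [h, hnn k]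

lemma tsum_ite_le {f : ℕ → ℝ} (hnn : ∀ k, 0 ≤ f k) (hf : Summable f)
    (P : ℕ → Prop) [DecidablePred P] :
    (∑' k, if P k then f k else 0) ≤ ∑' k, f k :=
  Summable.tsum_le_tsum (fun k => by by_cases h : P k <;> simp [h, hnn k])
    (summable_ite_of hnn hf P) hf

lemma tsum_ite_mono {f : ℕ → ℝ} (hnn : ∀ k, 0 ≤ f k) (hf : Summable f)
    (P Q : ℕ → Prop) [DecidablePred P] [DecidablePred Q] (h : ∀ k, P k → Q k) :
    (∑' k, if P k then f k else 0) ≤ ∑' k, if Q k then f k else 0 := by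
  refine Summable.tsum_le_tsum (fun k => ?_) (summable_ite_of hnn hf P) (summable_ite_of hnn hf Q)
  by_cases hp : P k
  · simp [hp, h k hp]
  · by_cases hq : Q k <;> simp [hp, hq, hnn k]

lemma poiPMF_nonneg {lam : ℝ} (h : 0 ≤ lam) (i : ℕ) : 0 ≤ poiPMF lam i := by
  unfold poiPMF; positivity

lemma poiPMF_summable (lam : ℝ) : Summable (poiPMF lam) :=
  ((Real.summable_pow_div_factorial lam).mul_left (Real.exp (-lam))).congr fun i => by
    simp [poiPMF, mul_div_assoc]

/-- Interchange of summation for the compound Poisson mass of a set. -/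
lemma cp_sum_eq (hp0 : p 0 = 0) (hpnn : ∀ k, 0 ≤ p k) (hpsum : HasSum p 1)
    {lam : ℝ} (hlam : 0 ≤ lam) (P : ℕ → Prop) [DecidablePred P] :
    (∑' k, if P k then cpPMF lam p k else 0)
      = ∑' i, poiPMF lam i * ∑' k, if P k then convPow p i k else 0 := by
  have hconv := hasSum_convPow hpnn hpsum
  set g : ℕ → ℕ → ℝ := fun i k => poiPMF lam i * (if P k then convPow p i k else 0) with hg
  have hg_nonneg : ∀ i k, 0 ≤ g i k := fun i k =>
    mul_nonneg (poiPMF_nonneg hlam i)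
      (by by_cases h : P k <;> simp [h, convPow_nonneg hpnn i k])
  have h1 : ∀ i, Summable (g i) := fun i =>
    (summable_ite_of (fun k => convPow_nonneg hpnn i k) (hconv i).summable P).mul_left _
  have hmu_nonneg : ∀ i, 0 ≤ ∑' k, if P k then convPow p i k else 0 := fun i =>
    tsum_ite_nonneg (fun k => convPow_nonneg hpnn i k) P
  have hmu_le : ∀ i, (∑' k, if P k then convPow p i k else 0) ≤ 1 := fun i => by
    calc (∑' k, if P k then convPow p i k else 0) ≤ ∑' k, convPow p i k :=
          tsum_ite_le (fun k => convPow_nonneg hpnn i k) (hconv i).summable P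
      _ = 1 := (hconv i).tsum_eq
  have htsum_g : ∀ i, (∑' k, g i k) = poiPMF lam i * ∑' k, if P k then convPow p i k else 0 :=
    fun i => tsum_mul_left
  have h2 : Summable fun i => ∑' k, g i k := by
    refine Summable.of_nonneg_of_le (fun i => ?_) (fun i => ?_) (poiPMF_summable lam)
    · exact tsum_nonneg fun k => hg_nonneg i k
    · rw [htsum_g i]
      exact mul_le_of_le_one_right (poiPMF_nonneg hlam i) (hmu_le i)
  have huncurry : Summable (Function.uncurry g) :=
    (summable_prod_of_nonneg (fun x => hg_nonneg x.1 x.2)).mpr ⟨h1, h2⟩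
  have h3 : ∀ k, Summable fun i => g i k := by
    intro k
    refine Summable.of_nonneg_of_le (fun i => hg_nonneg i k) (fun i => ?_) (poiPMF_summable lam)
    by_cases h : P k
    · simp only [hg, h, if_true]
      exact mul_le_of_le_one_right (poiPMF_nonneg hlam i) (convPow_le_one hpnn hpsum i k)
    · simp [hg, h, poiPMF_nonneg hlam i]
  calc (∑' k, if P k then cpPMF lam p k else 0) = ∑' k, ∑' i, g i k := by
        refine tsum_congr fun k => ?_
        by_cases h : P k
        · simp only [h, if_true, cpPMF, hg]
        · simp [hg, h]
    _ = ∑' i, ∑' k, g i k := Summable.tsum_comm' huncurry h1 h3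
    _ = ∑' i, poiPMF lam i * ∑' k, if P k then convPow p i k else 0 :=
        tsum_congr fun i => htsum_g i

/-- Shift the Poisson sum by `I` and factor out `exp(-lam) * lam^I`. -/
lemma shift_factor (w : ℕ → ℝ) (I : ℕ) (h0 : ∀ i, i < I → w i = 0) (lam : ℝ) :
    (∑' i, poiPMF lam i * w i)
      = Real.exp (-lam) * lam ^ I *
          ∑' j, lam ^ j * (w (I + j) / ((I + j).factorial : ℝ)) := by
  have hinj : Function.Injective fun j : ℕ => I + j := fun a b h => by
    simp only [] at h; omega
  have hsupp : Function.support (fun i => poiPMF lam i * w i) ⊆ Set.range fun j : ℕ => I + j := by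
    intro x hx
    by_contra hxr
    have hxI : x < I := by
      by_contra h
      exact hxr ⟨x - I, show I + (x - I) = x by omega⟩
    exact hx (by simp [h0 x hxI])
  rw [← hinj.tsum_eq hsupp, ← tsum_mul_left]
  refine tsum_congr fun j => ?_
  simp only [poiPMF]
  rw [pow_add]
  ring

/-- Continuity of the shifted series at `0⁺`. -/
lemma G_tendsto (a : ℕ → ℝ) (ha0 : ∀ j, 0 ≤ a j) (ha1 : ∀ j, a j ≤ 1) (I : ℕ) :
    Tendsto (fun lam : ℝ => ∑' j, lam ^ j * (a j / ((I + j).factorial : ℝ)))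
      (𝓝[>] (0 : ℝ)) (𝓝 (a 0 / (I.factorial : ℝ))) := by
  have hfacpos : ∀ j : ℕ, (0 : ℝ) < ((I + j).factorial : ℝ) := fun j => by
    exact_mod_cast Nat.factorial_pos (I + j)
  have hfrac0 : ∀ j, 0 ≤ a j / ((I + j).factorial : ℝ) := fun j =>
    div_nonneg (ha0 j) (hfacpos j).le
  have hfrac1 : ∀ j, a j / ((I + j).factorial : ℝ) ≤ 1 := fun j => by
    rw [div_le_one (hfacpos j)]
    exact (ha1 j).trans (by exact_mod_cast Nat.one_le_iff_ne_zero.mpr (Nat.factorial_ne_zero _))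
  have hsummable : ∀ lam : ℝ, 0 ≤ lam → lam < 1 →
      Summable fun j => lam ^ j * (a j / ((I + j).factorial : ℝ)) := by
    intro lam h0 h1
    refine Summable.of_nonneg_of_le (fun j => mul_nonneg (pow_nonneg h0 j) (hfrac0 j))
      (fun j => ?_) (summable_geometric_of_lt_one h0 h1)
    calc lam ^ j * (a j / ((I + j).factorial : ℝ)) ≤ lam ^ j * 1 :=
          mul_le_mul_of_nonneg_left (hfrac1 j) (pow_nonneg h0 j)
      _ = lam ^ j := mul_one _
  set T : ℝ → ℝ :=
    fun lam => ∑' j, lam ^ (j + 1) * (a (j + 1) / ((I + (j + 1)).factorial : ℝ)) with hT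
  have hTnonneg : ∀ lam : ℝ, 0 ≤ lam → 0 ≤ T lam := fun lam h0 =>
    tsum_nonneg fun j => mul_nonneg (pow_nonneg h0 _) (hfrac0 _)
  have hTle : ∀ lam : ℝ, 0 < lam → lam < 1 → T lam ≤ lam * (1 - lam)⁻¹ := by
    intro lam h0 h1
    have hgeo : Summable fun j : ℕ => lam ^ (j + 1) :=
      ((summable_geometric_of_lt_one h0.le h1).mul_left lam).congr fun j => by ring
    have hTsummand : Summable fun j => lam ^ (j + 1) * (a (j + 1) / ((I + (j + 1)).factorial : ℝ)) :=
      (summable_nat_add_iff 1).mpr (hsummable lam h0.le h1)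
    have h2 : T lam ≤ ∑' j : ℕ, lam ^ (j + 1) := by
      refine Summable.tsum_le_tsum (fun j => ?_) hTsummand hgeo
      calc lam ^ (j + 1) * (a (j + 1) / ((I + (j + 1)).factorial : ℝ)) ≤ lam ^ (j + 1) * 1 :=
            mul_le_mul_of_nonneg_left (hfrac1 _) (pow_nonneg h0.le _)
        _ = lam ^ (j + 1) := mul_one _
    have h3 : (∑' j : ℕ, lam ^ (j + 1)) = lam * (1 - lam)⁻¹ := by
      have : (∑' j : ℕ, lam ^ (j + 1)) = lam * ∑' j : ℕ, lam ^ j := by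
        rw [← tsum_mul_left]
        exact tsum_congr fun j => by ring
      rw [this, tsum_geometric_of_lt_one h0.le h1]
    rw [← h3]
    exact h2
  have hbound : Tendsto (fun lam : ℝ => lam * (1 - lam)⁻¹) (𝓝[>] 0) (𝓝 0) := by
    have hc : ContinuousAt (fun lam : ℝ => lam * (1 - lam)⁻¹) 0 :=
      continuousAt_id.mul ((continuousAt_const.sub continuousAt_id).inv₀ (by norm_num))
    have := hc.tendsto
    simp only [sub_zero, inv_one, mul_one, id] at this
    exact this.mono_left nhdsWithin_le_nhds
  have hTtend : Tendsto T (𝓝[>] (0 : ℝ)) (𝓝 0) := by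
    apply squeeze_zero'
    · filter_upwards [self_mem_nhdsWithin] with lam hlam
      exact hTnonneg lam (le_of_lt hlam)
    · filter_upwards [Ioo_mem_nhdsGT_of_mem (⟨le_rfl, one_pos⟩ : (0:ℝ) ∈ Set.Ico (0:ℝ) 1)]
        with lam hlam
      exact hTle lam hlam.1 hlam.2
    · exact hbound
  have key : ∀ lam ∈ Set.Ioo (0 : ℝ) 1,
      (∑' j, lam ^ j * (a j / ((I + j).factorial : ℝ))) = a 0 / (I.factorial : ℝ) + T lam := by
    intro lam hlam
    rw [Summable.tsum_eq_zero_add (hsummable lam hlam.1.le hlam.2)]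
    simp [hT]
  have hfinal : Tendsto (fun lam : ℝ => a 0 / (I.factorial : ℝ) + T lam) (𝓝[>] (0 : ℝ))
      (𝓝 (a 0 / (I.factorial : ℝ))) := by
    have h := (tendsto_const_nhds (x := a 0 / (I.factorial : ℝ)) (f := 𝓝[>] (0:ℝ))).add hTtend
    rwa [add_zero] at h
  refine hfinal.congr' ?_
  filter_upwards [Ioo_mem_nhdsGT_of_mem (⟨le_rfl, one_pos⟩ : (0:ℝ) ∈ Set.Ico (0:ℝ) 1)]
    with lam hlam
  exact (key lam hlam).symm

/-- The main ratio limit, for a general predicate `P` supported in `[m, ∞)`. -/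
lemma ratio_tendsto (θ : ℝ) (hθ : 0 < θ) (p : ℕ → ℝ) (hp0 : p 0 = 0) (hpnn : ∀ k, 0 ≤ p k)
    (hpsum : HasSum p 1) (m : ℕ) (hm : 1 ≤ m) (Im : ℕ)
    (hIm : Im = sInf {i : ℕ | 1 ≤ i ∧ 0 < ∑' k : ℕ, if m ≤ k then convPow p i k else 0})
    (P : ℕ → Prop) [DecidablePred P] (hP : ∀ k, P k → m ≤ k) :
    Tendsto (fun τ => (∑' k : ℕ, if P k then cpPMF (θ * τ) p k else 0) /
        (∑' k : ℕ, if m ≤ k then cpPMF (θ * τ) p k else 0)) (𝓝[>] (0 : ℝ))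
      (𝓝 ((∑' k : ℕ, if P k then convPow p Im k else 0) /
        (∑' k : ℕ, if m ≤ k then convPow p Im k else 0))) := by
  have hconv := hasSum_convPow hpnn hpsum
  -- `m` itself belongs to the defining set
  have hwMm : (∑' k : ℕ, if m ≤ k then convPow p m k else 0) = 1 := by
    have heach : ∀ k, (if m ≤ k then convPow p m k else 0) = convPow p m k := by
      intro k
      split
      · rfl
      · rw [convPow_eq_zero hp0 m k (by omega)]
    calc (∑' k : ℕ, if m ≤ k then convPow p m k else 0) = ∑' k, convPow p m k :=
          tsum_congr heach
      _ = 1 := (hconv m).tsum_eq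
  have hm_mem : m ∈ {i : ℕ | 1 ≤ i ∧ 0 < ∑' k : ℕ, if m ≤ k then convPow p i k else 0} :=
    ⟨hm, by rw [hwMm]; norm_num⟩
  have hIm_mem : Im ∈ {i : ℕ | 1 ≤ i ∧ 0 < ∑' k : ℕ, if m ≤ k then convPow p i k else 0} := by
    rw [hIm]
    exact Nat.sInf_mem ⟨m, hm_mem⟩
  obtain ⟨hIm1, hImpos⟩ := hIm_mem
  -- vanishing below `Im`
  have hvanishM : ∀ i, i < Im → (∑' k : ℕ, if m ≤ k then convPow p i k else 0) = 0 := by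
    intro i hi
    rcases Nat.eq_zero_or_pos i with rfl | hi1
    · have heach : ∀ k, (if m ≤ k then convPow p 0 k else 0) = 0 := by
        intro k
        split
        · simp only [convPow]
          rw [if_neg (by omega)]
        · rfl
      calc (∑' k : ℕ, if m ≤ k then convPow p 0 k else 0) = ∑' _ : ℕ, (0:ℝ) :=
            tsum_congr heach
        _ = 0 := tsum_zero
    · by_contra hne
      have hpos : 0 < ∑' k : ℕ, if m ≤ k then convPow p i k else 0 :=
        lt_of_le_of_ne (tsum_ite_nonneg (fun k => convPow_nonneg hpnn i k) _) (Ne.symm hne)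
      have : Im ≤ i := by
        rw [hIm]
        exact Nat.sInf_le ⟨hi1, hpos⟩
      omega
  have hvanishP : ∀ i, i < Im → (∑' k : ℕ, if P k then convPow p i k else 0) = 0 := by
    intro i hi
    have hle : (∑' k : ℕ, if P k then convPow p i k else 0)
        ≤ ∑' k : ℕ, if m ≤ k then convPow p i k else 0 :=
      tsum_ite_mono (fun k => convPow_nonneg hpnn i k) (hconv i).summable P _ hP
    have hge : 0 ≤ ∑' k : ℕ, if P k then convPow p i k else 0 :=
      tsum_ite_nonneg (fun k => convPow_nonneg hpnn i k) P
    rw [hvanishM i hi] at hle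
    linarith
  -- bounds for weights
  have hwnn : ∀ (Q : ℕ → Prop) (_ : DecidablePred Q) (i : ℕ),
      0 ≤ ∑' k : ℕ, if Q k then convPow p i k else 0 := fun Q _ i =>
    tsum_ite_nonneg (fun k => convPow_nonneg hpnn i k) Q
  have hwle : ∀ (Q : ℕ → Prop) (_ : DecidablePred Q) (i : ℕ),
      (∑' k : ℕ, if Q k then convPow p i k else 0) ≤ 1 := fun Q _ i => by
    calc (∑' k : ℕ, if Q k then convPow p i k else 0) ≤ ∑' k, convPow p i k :=
          tsum_ite_le (fun k => convPow_nonneg hpnn i k) (hconv i).summable Q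
      _ = 1 := (hconv i).tsum_eq
  -- the two series
  set Ga : ℝ → ℝ := fun lam =>
    ∑' j, lam ^ j * ((∑' k : ℕ, if P k then convPow p (Im + j) k else 0) /
      ((Im + j).factorial : ℝ)) with hGa
  set Gb : ℝ → ℝ := fun lam =>
    ∑' j, lam ^ j * ((∑' k : ℕ, if m ≤ k then convPow p (Im + j) k else 0) /
      ((Im + j).factorial : ℝ)) with hGb
  have hGatend : Tendsto Ga (𝓝[>] (0:ℝ))
      (𝓝 ((∑' k : ℕ, if P k then convPow p Im k else 0) / (Im.factorial : ℝ))) := by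
    have := G_tendsto (fun j => ∑' k : ℕ, if P k then convPow p (Im + j) k else 0)
      (fun j => hwnn P inferInstance _) (fun j => hwle P inferInstance _) Im
    simpa using this
  have hGbtend : Tendsto Gb (𝓝[>] (0:ℝ))
      (𝓝 ((∑' k : ℕ, if m ≤ k then convPow p Im k else 0) / (Im.factorial : ℝ))) := by
    have := G_tendsto (fun j => ∑' k : ℕ, if m ≤ k then convPow p (Im + j) k else 0)
      (fun j => hwnn _ inferInstance _) (fun j => hwle _ inferInstance _) Im
    simpa using this
  have hfacpos : (0:ℝ) < (Im.factorial : ℝ) := by exact_mod_cast Nat.factorial_pos Im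
  have hbne : ((∑' k : ℕ, if m ≤ k then convPow p Im k else 0) / (Im.factorial : ℝ)) ≠ 0 :=
    ne_of_gt (div_pos hImpos hfacpos)
  have hdiv : Tendsto (fun lam => Ga lam / Gb lam) (𝓝[>] (0:ℝ))
      (𝓝 ((∑' k : ℕ, if P k then convPow p Im k else 0) /
        (∑' k : ℕ, if m ≤ k then convPow p Im k else 0))) := by
    have h := hGatend.div hGbtend hbne
    have heq : ((∑' k : ℕ, if P k then convPow p Im k else 0) / (Im.factorial : ℝ)) /
        ((∑' k : ℕ, if m ≤ k then convPow p Im k else 0) / (Im.factorial : ℝ))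
          = (∑' k : ℕ, if P k then convPow p Im k else 0) /
            (∑' k : ℕ, if m ≤ k then convPow p Im k else 0) := by
      rw [div_div_div_comm, div_self (ne_of_gt hfacpos), div_one]
    rwa [heq] at h
  -- equality of ratio function for positive argument
  have hfun : ∀ lam : ℝ, 0 < lam →
      (∑' k : ℕ, if P k then cpPMF lam p k else 0) /
        (∑' k : ℕ, if m ≤ k then cpPMF lam p k else 0) = Ga lam / Gb lam := by
    intro lam hlam
    rw [cp_sum_eq hp0 hpnn hpsum hlam.le P, cp_sum_eq hp0 hpnn hpsum hlam.le (fun k => m ≤ k)]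
    rw [shift_factor (fun i => ∑' k : ℕ, if P k then convPow p i k else 0) Im hvanishP lam]
    rw [shift_factor (fun i => ∑' k : ℕ, if m ≤ k then convPow p i k else 0) Im hvanishM lam]
    have hC : Real.exp (-lam) * lam ^ Im ≠ 0 :=
      ne_of_gt (mul_pos (Real.exp_pos _) (pow_pos hlam _))
    rw [mul_div_mul_left _ _ hC]
  -- compose with `τ ↦ θ τ`
  have hmap : Tendsto (fun τ : ℝ => θ * τ) (𝓝[>] (0:ℝ)) (𝓝[>] (0:ℝ)) := by
    rw [tendsto_nhdsWithin_iff]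
    constructor
    · have : Tendsto (fun τ : ℝ => θ * τ) (𝓝 0) (𝓝 (θ * 0)) :=
        (continuous_const.mul continuous_id).tendsto 0
      rw [mul_zero] at this
      exact this.mono_left nhdsWithin_le_nhds
    · filter_upwards [self_mem_nhdsWithin] with τ hτ
      exact mul_pos hθ hτ
  have hcomp := hdiv.comp hmap
  refine hcomp.congr' ?_
  filter_upwards [self_mem_nhdsWithin] with τ hτ
  exact (hfun (θ * τ) (mul_pos hθ hτ)).symm

end Aux

/-- Let `N^τ` be compound Poisson with rate `θτ` and cluster distribution
`p` on `{1,2,…}`, and let `I_m = min {i ≥ 1 | p^{*i}(ℤ_m) > 0}`.  Then for every `A ⊆ ℤ_m`,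
`P(N^τ ∈ A | N^τ ≥ m) → p^{*I_m}(A)/p^{*I_m}(ℤ_m)` as `τ → 0⁺`; in particular for `m = 1`
the limit distribution is `p` itself. -/
theorem stmt6 (θ : ℝ) (hθ : 0 < θ)
    (p : ℕ → ℝ) (hp0 : p 0 = 0) (hpnn : ∀ k, 0 ≤ p k) (hpsum : HasSum p 1)
    (m : ℕ) (hm : 1 ≤ m)
    (Im : ℕ)
    (hIm : Im = sInf {i : ℕ | 1 ≤ i ∧ 0 < ∑' k : ℕ, if m ≤ k then convPow p i k else 0}) :
    (∀ A : Set ℕ, A ⊆ Set.Ici m →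
      Tendsto
        (fun τ => (∑' k : ℕ, if k ∈ A then cpPMF (θ * τ) p k else 0) /
          (∑' k : ℕ, if m ≤ k then cpPMF (θ * τ) p k else 0))
        (𝓝[>] (0:ℝ))
        (𝓝 ((∑' k : ℕ, if k ∈ A then convPow p Im k else 0) /
          (∑' k : ℕ, if m ≤ k then convPow p Im k else 0)))) ∧
    (m = 1 → ∀ A : Set ℕ, A ⊆ Set.Ici 1 →
      Tendsto
        (fun τ => (∑' k : ℕ, if k ∈ A then cpPMF (θ * τ) p k else 0) /
          (∑' k : ℕ, if 1 ≤ k then cpPMF (θ * τ) p k else 0))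
        (𝓝[>] (0:ℝ))
        (𝓝 (∑' k : ℕ, if k ∈ A then p k else 0))) := by
  constructor
  · intro A hA
    exact ratio_tendsto θ hθ p hp0 hpnn hpsum m hm Im hIm (· ∈ A) fun k hk => hA hk
  · intro hm1 A hA
    subst hm1
    have h1 := ratio_tendsto θ hθ p hp0 hpnn hpsum 1 le_rfl Im hIm (· ∈ A) fun k hk => hA hk
    -- `Im = 1`
    have hmem : 1 ∈ {i : ℕ | 1 ≤ i ∧ 0 < ∑' k : ℕ, if 1 ≤ k then convPow p i k else 0} := by
      refine ⟨le_rfl, ?_⟩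
      have heach : ∀ k, (if 1 ≤ k then convPow p 1 k else 0) = p k := by
        intro k
        rw [convPow_one]
        split
        · rfl
        · have hk0 : k = 0 := by omega
          rw [hk0, hp0]
      have : (∑' k : ℕ, if 1 ≤ k then convPow p 1 k else 0) = 1 := by
        calc (∑' k : ℕ, if 1 ≤ k then convPow p 1 k else 0) = ∑' k, p k := tsum_congr heach
          _ = 1 := hpsum.tsum_eq
      rw [this]; norm_num
    have hImle : Im ≤ 1 := by
      rw [hIm]; exact Nat.sInf_le hmem
    have hImge : 1 ≤ Im := by
      have : Im ∈ {i : ℕ | 1 ≤ i ∧ 0 < ∑' k : ℕ, if 1 ≤ k then convPow p i k else 0} := by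
        rw [hIm]; exact Nat.sInf_mem ⟨1, hmem⟩
      exact this.1
    have hIm1 : Im = 1 := le_antisymm hImle hImge
    have hnum : (∑' k : ℕ, if k ∈ A then convPow p 1 k else 0)
        = ∑' k : ℕ, if k ∈ A then p k else 0 :=
      tsum_congr fun k => by rw [convPow_one]
    have hden : (∑' k : ℕ, if 1 ≤ k then convPow p 1 k else 0) = 1 := by
      have heach : ∀ k, (if 1 ≤ k then convPow p 1 k else 0) = p k := by
        intro k
        rw [convPow_one]
        split
        · rfl
        · have hk0 : k = 0 := by omega
          rw [hk0, hp0]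
      calc (∑' k : ℕ, if 1 ≤ k then convPow p 1 k else 0) = ∑' k, p k := tsum_congr heach
        _ = 1 := hpsum.tsum_eq
    rw [hIm1, hnum, hden, div_one] at h1
    exact h1
end

section
/- Let m be a nonnegative integer, r > 0 and 0 < p < 1. A random variable W taking values in ℤ_m = {m, m+1, …} with E W < ∞ has distribution NB^{(m)}(r,p) if and only if for every bounded function g_m on ℤ_m, E[ p(r + W) g_m(W + 1) − W g_m(W) 1{W > m} ] = 0. -/
open MeasureTheory Filter Set Topology Classical

/-- The negative binomial probability mass function:
`P(Z = k) = Γ(r+k)/(Γ(r) k!) (1-p)^r p^k`. -/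
noncomputable def nbPMF (r p : ℝ) (k : ℕ) : ℝ :=
  Real.Gamma (r + k) / (Real.Gamma r * (k.factorial : ℝ)) * (1 - p) ^ r * p ^ k

lemma nbPMF_pos {r p : ℝ} (hr : 0 < r) (hp0 : 0 < p) (hp1 : p < 1) (k : ℕ) :
    0 < nbPMF r p k := by
  unfold nbPMF
  have h1 : (0:ℝ) < Real.Gamma (r + k) := Real.Gamma_pos_of_pos (by positivity)
  have h2 : (0:ℝ) < Real.Gamma r := Real.Gamma_pos_of_pos hr
  have h3 : (0:ℝ) < (1 - p) ^ r := Real.rpow_pos_of_pos (by linarith) r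
  positivity

lemma nbPMF_rec {r p : ℝ} (hr : 0 < r) (k : ℕ) :
    ((k:ℝ) + 1) * nbPMF r p (k + 1) = p * (r + k) * nbPMF r p k := by
  unfold nbPMF
  have h0 : r + (k:ℝ) ≠ 0 := by positivity
  have hg : Real.Gamma (r + (k + 1 : ℕ)) = (r + k) * Real.Gamma (r + k) := by
    push_cast
    rw [show r + ((k:ℝ) + 1) = (r + k) + 1 by ring, Real.Gamma_add_one h0]
  rw [hg]
  have hf : ((k + 1).factorial : ℝ) = ((k:ℝ) + 1) * (k.factorial : ℝ) := by
    rw [Nat.factorial_succ]; push_cast; ring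
  rw [hf]
  have hk1 : ((k:ℝ) + 1) ≠ 0 := by positivity
  have hfk : (k.factorial : ℝ) ≠ 0 := by positivity
  field_simp
  ring

lemma nbPMF_mul_summable {r p : ℝ} (hr : 0 < r) (hp0 : 0 < p) (hp1 : p < 1) :
    Summable (fun k => (r + k) * nbPMF r p k) := by
  apply summable_of_ratio_norm_eventually_le (r := (1 + p) / 2) (by linarith)
  have htend : Tendsto (fun k : ℕ => p * (r + (k:ℝ) + 1) / ((k:ℝ) + 1)) atTop (𝓝 p) := by
    have : (fun k : ℕ => p * (r + (k:ℝ) + 1) / ((k:ℝ) + 1)) =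
        fun k : ℕ => p * ((r + (k:ℝ) + 1) / ((k:ℝ) + 1)) := by
      funext k; ring
    rw [this]
    have h2 : Tendsto (fun k : ℕ => (r + (k:ℝ) + 1) / ((k:ℝ) + 1)) atTop (𝓝 1) := by
      have : (fun k : ℕ => (r + (k:ℝ) + 1) / ((k:ℝ) + 1)) =
          fun k : ℕ => 1 + r / ((k:ℝ) + 1) := by
        funext k
        have : ((k:ℝ) + 1) ≠ 0 := by positivity
        field_simp
        ring
      rw [this]
      have := Tendsto.const_div_atTop (g := fun k : ℕ => (k:ℝ) + 1) (r := r)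
        (tendsto_atTop_add_const_right atTop 1 tendsto_natCast_atTop_atTop)
      simpa using tendsto_const_nhds.add this
    simpa using tendsto_const_nhds.mul h2
  have hev : ∀ᶠ k : ℕ in atTop, p * (r + (k:ℝ) + 1) / ((k:ℝ) + 1) ≤ (1 + p) / 2 := by
    have := htend.eventually_le_const (show p < (1+p)/2 by linarith)
    exact this
  filter_upwards [hev] with k hk
  have hpos : 0 < nbPMF r p k := nbPMF_pos hr hp0 hp1 k
  have hpos1 : 0 < nbPMF r p (k+1) := nbPMF_pos hr hp0 hp1 (k+1)
  have hrec := nbPMF_rec (p := p) hr k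
  have hk1 : (0:ℝ) < (k:ℝ) + 1 := by positivity
  have heq : nbPMF r p (k+1) = p * (r + k) / ((k:ℝ)+1) * nbPMF r p k := by
    field_simp
    linarith [hrec]
  rw [Real.norm_of_nonneg (by positivity), Real.norm_of_nonneg (by positivity)]
  have : (r + ((k:ℕ)+1:ℕ)) * nbPMF r p (k+1)
      = (p * (r + (k:ℝ) + 1) / ((k:ℝ)+1)) * ((r + k) * nbPMF r p k) := by
    rw [heq]; push_cast; field_simp; ring
  rw [this]
  have hnn : 0 ≤ (r + (k:ℝ)) * nbPMF r p k := by positivity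
  exact mul_le_mul_of_nonneg_right hk hnn

lemma nbPMF_summable {r p : ℝ} (hr : 0 < r) (hp0 : 0 < p) (hp1 : p < 1) :
    Summable (nbPMF r p) := by
  refine Summable.of_nonneg_of_le (fun k => (nbPMF_pos hr hp0 hp1 k).le)
    (fun k => ?_) ((nbPMF_mul_summable hr hp0 hp1).mul_left (1/r))
  have hpos := nbPMF_pos hr hp0 hp1 k
  rw [div_mul_eq_mul_div, le_div_iff₀ hr]
  have hk : (0:ℝ) ≤ (k:ℝ) := Nat.cast_nonneg k
  nlinarith

lemma tsum_meas_eq_one {Ω : Type*} [MeasurableSpace Ω] (μ : Measure Ω) [IsProbabilityMeasure μ]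
    (W : Ω → ℕ) (hW : Measurable W) :
    ∑' k : ℕ, (μ {ω | W ω = k}).toReal = 1 := by
  have h1 : ∑' k : ℕ, μ (W ⁻¹' {k}) = μ univ := by
    rw [← measure_iUnion (fun i j hij => Disjoint.preimage W (by simpa using hij))
      (fun k => hW (measurableSet_singleton k))]
    congr 1
    ext ω; simp
  calc ∑' k : ℕ, (μ {ω | W ω = k}).toReal
      = (∑' k : ℕ, μ (W ⁻¹' {k})).toReal :=
        (ENNReal.tsum_toReal_eq (fun _ => measure_ne_top μ _)).symm
    _ = 1 := by rw [h1, measure_univ, ENNReal.toReal_one]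

lemma integral_comp_eq_tsum {Ω : Type*} [MeasurableSpace Ω] (μ : Measure Ω)
    [IsProbabilityMeasure μ] (W : Ω → ℕ) (hW : Measurable W) (f : ℕ → ℝ)
    (hf : Integrable (fun ω => f (W ω)) μ) :
    ∫ ω, f (W ω) ∂μ = ∑' k : ℕ, (μ {ω | W ω = k}).toReal * f k := by
  have hmeas : Measurable f := measurable_from_top
  rw [← integral_map hW.aemeasurable hmeas.aestronglyMeasurable]
  have hfi : Integrable f (μ.map W) :=
    (integrable_map_measure hmeas.aestronglyMeasurable hW.aemeasurable).2 hf
  rw [integral_countable' hfi]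
  refine tsum_congr fun k => ?_
  rw [measureReal_def, Measure.map_apply hW (measurableSet_singleton k)]
  rfl

/-- Stein characterization of the conditional negative binomial
distribution `NB^{(m)}(r,p)`: a random variable `W` with values in `ℤ_m` and `E W < ∞` has
law `NB^{(m)}(r,p)` iff `E[p(r+W) g(W+1) − W g(W) 1{W > m}] = 0` for every bounded `g`. -/
theorem stmt9 {Ω : Type*} [MeasurableSpace Ω] (μ : Measure Ω) [IsProbabilityMeasure μ]
    (m : ℕ) (r p : ℝ) (hr : 0 < r) (hp0 : 0 < p) (hp1 : p < 1)
    (W : Ω → ℕ) (hW : Measurable W) (hWm : ∀ ω, m ≤ W ω)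
    (hint : Integrable (fun ω => (W ω : ℝ)) μ) :
    (∀ k : ℕ, (μ {ω | W ω = k}).toReal =
        (if m ≤ k then
          nbPMF r p k / (∑' j : ℕ, if m ≤ j then nbPMF r p j else 0)
        else 0)) ↔
    (∀ g : ℕ → ℝ, (∃ C, ∀ k, |g k| ≤ C) →
      ∫ ω, (p * (r + (W ω : ℝ)) * g (W ω + 1) -
        (W ω : ℝ) * g (W ω) * (if m < W ω then 1 else 0)) ∂μ = 0) := by
  set S := ∑' j : ℕ, if m ≤ j then nbPMF r p j else 0 with hSdef
  set q : ℕ → ℝ := fun k => (μ {ω | W ω = k}).toReal with hqdef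
  have hq_nonneg : ∀ k, 0 ≤ q k := fun k => ENNReal.toReal_nonneg
  have hq_sum : ∑' k, q k = 1 := tsum_meas_eq_one μ W hW
  have hkey : ∀ f : ℕ → ℝ, Integrable (fun ω => f (W ω)) μ →
      ∫ ω, f (W ω) ∂μ = ∑' k, q k * f k :=
    fun f hf => integral_comp_eq_tsum μ W hW f hf
  have hq0 : ∀ k, k < m → q k = 0 := by
    intro k hk
    have he : {ω | W ω = k} = ∅ := by
      ext ω
      simp only [mem_setOf_eq, mem_empty_iff_false, iff_false]
      intro h
      exact absurd (h ▸ hWm ω) (not_le.2 hk)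
    simp only [hqdef, he, measure_empty, ENNReal.toReal_zero]
  have hS0 : 0 ≤ S := by
    rw [hSdef]
    refine tsum_nonneg fun j => ?_
    split_ifs
    · exact (nbPMF_pos hr hp0 hp1 j).le
    · exact le_rfl
  constructor
  · intro hq g hg
    have hq' : ∀ k : ℕ, q k = if m ≤ k then nbPMF r p k / S else 0 := hq
    obtain ⟨C, hC⟩ := hg
    have hC0 : 0 ≤ C := (abs_nonneg _).trans (hC 0)
    set f : ℕ → ℝ := fun k => p * (r + (k:ℝ)) * g (k+1) -
      (k:ℝ) * g k * (if m < k then 1 else 0) with hfdef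
    have hfb : ∀ k : ℕ, |f k| ≤ p*C*r + (p*C + C) * k := by
      intro k
      have hind : |(if m < k then (1:ℝ) else 0)| ≤ 1 := by split_ifs <;> simp
      have h1 : |p * (r + (k:ℝ)) * g (k+1)| ≤ p * (r+k) * C := by
        rw [abs_mul, abs_of_nonneg (by positivity : (0:ℝ) ≤ p * (r + (k:ℝ)))]
        exact mul_le_mul_of_nonneg_left (hC (k+1)) (by positivity)
      have h2 : |(k:ℝ) * g k * (if m < k then 1 else 0)| ≤ (k:ℝ) * C := by
        rw [abs_mul, abs_mul, abs_of_nonneg (Nat.cast_nonneg k)]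
        calc (k:ℝ) * |g k| * |if m < k then (1:ℝ) else 0|
            ≤ (k:ℝ) * C * 1 := by
              apply mul_le_mul _ hind (abs_nonneg _) (by positivity)
              exact mul_le_mul_of_nonneg_left (hC k) (Nat.cast_nonneg k)
          _ = (k:ℝ) * C := by ring
      calc |f k| ≤ |p * (r + (k:ℝ)) * g (k+1)| + |(k:ℝ) * g k * (if m < k then 1 else 0)| :=
            abs_sub _ _
        _ ≤ p * (r+k) * C + (k:ℝ) * C := add_le_add h1 h2
        _ = p*C*r + (p*C + C) * k := by ring
    have hfint : Integrable (fun ω => f (W ω)) μ := by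
      refine Integrable.mono' ((hint.const_mul (p*C+C)).add (integrable_const (p*C*r)))
        (((measurable_from_top : Measurable f).comp hW).aestronglyMeasurable) ?_
      filter_upwards with ω
      rw [Real.norm_eq_abs]
      calc |f (W ω)| ≤ p*C*r + (p*C + C) * (W ω : ℝ) := hfb (W ω)
        _ = (p*C+C) * (W ω : ℝ) + p*C*r := by ring
    have hgoal : ∫ ω, (p * (r + (W ω : ℝ)) * g (W ω + 1) -
        (W ω : ℝ) * g (W ω) * (if m < W ω then 1 else 0)) ∂μ = ∫ ω, f (W ω) ∂μ := rfl
    rw [hgoal, hkey f hfint]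
    set A : ℕ → ℝ := fun k => q k * (p * (r+(k:ℝ)) * g (k+1)) with hAdef
    set B : ℕ → ℝ := fun k => q k * ((k:ℝ) * g k * (if m < k then 1 else 0)) with hBdef
    have hkeyAB : ∀ k, A k = B (k+1) := by
      intro k
      by_cases hk : m ≤ k
      · have hqk : q k = nbPMF r p k / S := by rw [hq' k, if_pos hk]
        have hqk1 : q (k+1) = nbPMF r p (k+1) / S := by
          rw [hq' (k+1), if_pos (hk.trans (Nat.le_succ k))]
        have hind : (if m < k+1 then (1:ℝ) else 0) = 1 := by
          rw [if_pos (Nat.lt_succ_of_le hk)]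
        have hrec := nbPMF_rec (p := p) hr k
        simp only [hAdef, hBdef, hqk, hqk1, hind]
        push_cast
        have h2 : nbPMF r p k * (p * (r + (k:ℝ)) * g (k+1)) =
            nbPMF r p (k+1) * (((k:ℝ)+1) * g (k+1) * 1) := by
          linear_combination (-(g (k+1))) * hrec
        rw [div_mul_eq_mul_div, div_mul_eq_mul_div, h2]
      · have hqk : q k = 0 := hq0 k (not_le.1 hk)
        have hlt : ¬ m < k+1 := by omega
        simp [hAdef, hBdef, hqk, hlt]
    have hA : Summable A := by
      refine Summable.of_norm_bounded (g := fun k => (p*C/S) * ((r + (k:ℝ)) * nbPMF r p k))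
        ((nbPMF_mul_summable hr hp0 hp1).mul_left _) fun k => ?_
      rw [Real.norm_eq_abs, hAdef]
      have hqle : q k ≤ nbPMF r p k / S := by
        rw [hq' k]
        split_ifs
        · exact le_rfl
        · exact div_nonneg (nbPMF_pos hr hp0 hp1 k).le hS0
      have hg1 : |g (k+1)| ≤ C := hC (k+1)
      calc |q k * (p * (r+(k:ℝ)) * g (k+1))|
          = q k * (p * (r+(k:ℝ))) * |g (k+1)| := by
            rw [abs_mul, abs_mul, abs_of_nonneg (hq_nonneg k),
              abs_of_nonneg (by positivity : (0:ℝ) ≤ p * (r+(k:ℝ)))]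
            ring
        _ ≤ (nbPMF r p k / S) * (p * (r+(k:ℝ))) * C := by
            apply mul_le_mul _ hg1 (abs_nonneg _)
              (mul_nonneg (div_nonneg (nbPMF_pos hr hp0 hp1 k).le hS0) (by positivity))
            exact mul_le_mul_of_nonneg_right hqle (by positivity)
        _ = (p*C/S) * ((r + (k:ℝ)) * nbPMF r p k) := by ring
    have hA' : (fun k => B (k+1)) = A := funext fun k => (hkeyAB k).symm
    have hB : Summable B := (summable_nat_add_iff 1).1 (hA' ▸ hA)
    have hB0 : B 0 = 0 := by simp [hBdef]
    have hqf : ∀ k, q k * f k = A k - B k := by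
      intro k
      simp only [hAdef, hBdef, hfdef]
      ring
    calc ∑' k, q k * f k = ∑' k, (A k - B k) := tsum_congr hqf
      _ = (∑' k, A k) - (∑' k, B k) := Summable.tsum_sub hA hB
      _ = (∑' k, A k) - (B 0 + ∑' k, B (k+1)) := by rw [Summable.tsum_eq_zero_add hB]
      _ = 0 := by rw [hB0, hA']; ring
  · intro hSt
    have hΓm : nbPMF r p m ≠ 0 := (nbPMF_pos hr hp0 hp1 m).ne'
    have hrec : ∀ n, m ≤ n → p * (r + (n:ℝ)) * q n = ((n:ℝ)+1) * q (n+1) := by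
      intro n hn
      set g : ℕ → ℝ := fun k => if k = n+1 then 1 else 0 with hgdef
      have hgb : ∃ C, ∀ k, |g k| ≤ C :=
        ⟨1, fun k => by by_cases h : k = n+1 <;> simp [hgdef, h]⟩
      have h0 := hSt g hgb
      set f : ℕ → ℝ := fun k => p * (r + (k:ℝ)) * g (k+1) -
        (k:ℝ) * g k * (if m < k then 1 else 0) with hfdef
      have hfeq : ∀ k, f k = if k = n then p*(r+(n:ℝ))
          else if k = n+1 then -(((n:ℝ)+1) * (if m < n+1 then 1 else 0)) else 0 := by
        intro k
        simp only [hfdef, hgdef]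
        by_cases h1 : k = n
        · subst h1
          rw [if_pos rfl, if_pos rfl, if_neg (by omega)]
          ring
        · rw [if_neg h1]
          by_cases h2 : k = n+1
          · subst h2
            rw [if_neg (by omega), if_pos rfl, if_pos rfl]
            push_cast
            ring
          · rw [if_neg h2, if_neg (by omega), if_neg h2]
            ring
      have hD : ∀ k, |f k| ≤ p*(r+(n:ℝ)) + ((n:ℝ)+1) := by
        intro k
        rw [hfeq k]
        have hind : |(if m < n+1 then (1:ℝ) else 0)| ≤ 1 := by split_ifs <;> simp
        by_cases h1 : k = n
        · rw [if_pos h1, abs_of_nonneg (by positivity)]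
          have : (0:ℝ) ≤ (n:ℝ)+1 := by positivity
          linarith
        · rw [if_neg h1]
          by_cases h2 : k = n+1
          · rw [if_pos h2, abs_neg, abs_mul]
            have h3 : |((n:ℝ)+1)| = (n:ℝ)+1 := abs_of_nonneg (by positivity)
            rw [h3]
            have : ((n:ℝ)+1) * |if m < n+1 then (1:ℝ) else 0| ≤ ((n:ℝ)+1) * 1 :=
              mul_le_mul_of_nonneg_left hind (by positivity)
            have hp' : (0:ℝ) ≤ p*(r+(n:ℝ)) := by positivity
            linarith
          · rw [if_neg h2, abs_zero]
            positivity
      have hfint : Integrable (fun ω => f (W ω)) μ := by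
        refine Integrable.mono' (integrable_const (p*(r+(n:ℝ)) + ((n:ℝ)+1)))
          (((measurable_from_top : Measurable f).comp hW).aestronglyMeasurable) ?_
        filter_upwards with ω
        rw [Real.norm_eq_abs]
        exact hD (W ω)
      have h1 : ∫ ω, f (W ω) ∂μ = 0 := h0
      rw [hkey f hfint] at h1
      have h2 : ∑' k, q k * f k = q n * (p*(r+(n:ℝ))) + q (n+1) * (-(((n:ℝ)+1))) := by
        rw [tsum_eq_sum (s := {n, n+1}) ?_]
        · rw [Finset.sum_insert (by simp), Finset.sum_singleton]
          rw [hfeq n, hfeq (n+1)]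
          have hne : ¬ (n+1 = n) := by omega
          have hmn1 : m < n+1 := Nat.lt_succ_of_le hn
          rw [if_pos rfl, if_neg hne, if_pos rfl, if_pos hmn1]
          ring
        · intro k hk
          simp only [Finset.mem_insert, Finset.mem_singleton, not_or] at hk
          rw [hfeq k, if_neg hk.1, if_neg hk.2]
          ring
      rw [h2] at h1
      linear_combination h1
    have hform : ∀ k, m ≤ k → q k = q m / nbPMF r p m * nbPMF r p k := by
      intro k hk
      induction k, hk using Nat.le_induction with
      | base => field_simp
      | succ n hn ih =>
        have h := hrec n hn
        have hn1 : ((n:ℝ)+1) ≠ 0 := by positivity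
        have hq1 : q (n+1) = p * (r + (n:ℝ)) * q n / ((n:ℝ)+1) := by
          rw [eq_div_iff hn1]
          linear_combination -h
        rw [hq1, ih]
        have hrec2 := nbPMF_rec (p := p) hr n
        rw [div_eq_iff hn1]
        linear_combination (-(q m / nbPMF r p m)) * hrec2
    have hcS : q m / nbPMF r p m * S = 1 := by
      have h1 : ∑' k, q k = q m / nbPMF r p m * S := by
        calc ∑' k, q k
            = ∑' k, (q m / nbPMF r p m) * (if m ≤ k then nbPMF r p k else 0) := by
              refine tsum_congr fun k => ?_
              by_cases hk : m ≤ k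
              · rw [if_pos hk, hform k hk]
              · rw [if_neg hk, hq0 k (not_le.1 hk), mul_zero]
          _ = q m / nbPMF r p m * S := by rw [tsum_mul_left]
      linarith [hq_sum, h1]
    have hSne : S ≠ 0 := by
      intro h
      rw [h, mul_zero] at hcS
      exact one_ne_zero hcS.symm
    have hc : q m / nbPMF r p m = 1 / S := by
      rw [eq_div_iff hSne]
      exact hcS
    intro k
    show q k = if m ≤ k then nbPMF r p k / S else 0
    by_cases hk : m ≤ k
    · rw [if_pos hk]
      calc q k = q m / nbPMF r p m * nbPMF r p k := hform k hk
        _ = nbPMF r p k / S := by rw [hc]; ring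
    · rw [if_neg hk]
      exact hq0 k (not_le.1 hk)
end
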